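/- arXiv:2105.15056 — 2 statements merged into one kernel-verified Lean document; each statement's English description precedes it below -/
import Mathlib

section
/- Let θ₂ ∈ [0, π/2] and write c₂ = cos(θ₂), s₂ = sin(θ₂) (so that c₂ + 2s₂ > 0). Let p ∈ C¹([0,1]) with p > 0, let q ∈ C⁰([0,1]), q_c ∈ ℝ, and set q̃(x) = q(x) − q_c. Define a(x) = (2p(x) + 2x p′(x) − x² q̃(x)) / (c₂ + 2s₂) and b(x) = −x² / (c₂ + 2s₂). If φ ∈ C²([0,1]) satisfies −(p φ′)′ + q φ = λ φ on [0,1] and c₂ φ(1) + s₂ φ′(1) = 0, then ∫₀¹ a(x) φ(x) dx + (−λ + q_c) ∫₀¹ b(x) φ(x) dx = p(1) ( s₂ φ(1) − c₂ φ′(1) ). -/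
open Real Set

/-- One-sided/within derivative on the interval `[0,1]`. -/
noncomputable def dI (f : ℝ → ℝ) (x : ℝ) : ℝ := derivWithin f (Set.Icc 0 1) x

/-- The identity `⟨a, φ⟩ + (-λ + q_c) ⟨b, φ⟩ = p(1) (sin θ₂ φ(1) - cos θ₂ φ'(1))` for the
input coefficients obtained when projecting the boundary-controlled reaction–diffusion PDE
onto a Sturm–Liouville eigenfunction `φ` with eigenvalue `λ`. -/
theorem stmt_5 (θ₂ : ℝ) (hθ₂ : θ₂ ∈ Set.Icc 0 (π/2))
    (p q qt : ℝ → ℝ) (q_c : ℝ)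
    (hp : ContDiffOn ℝ 1 p (Set.Icc 0 1)) (hppos : ∀ x ∈ Set.Icc (0:ℝ) 1, 0 < p x)
    (hq : ContinuousOn q (Set.Icc 0 1))
    (hqt : ∀ x, qt x = q x - q_c)
    (a b : ℝ → ℝ)
    (ha : ∀ x, a x = (2 * p x + 2 * x * dI p x - x^2 * qt x) / (Real.cos θ₂ + 2 * Real.sin θ₂))
    (hb : ∀ x, b x = -x^2 / (Real.cos θ₂ + 2 * Real.sin θ₂))
    (lam : ℝ) (φ : ℝ → ℝ) (hφ : ContDiffOn ℝ 2 φ (Set.Icc 0 1))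
    (heig : ∀ x ∈ Set.Icc (0:ℝ) 1,
      -(dI (fun y => p y * dI φ y) x) + q x * φ x = lam * φ x)
    (hbc1 : Real.cos θ₂ * φ 1 + Real.sin θ₂ * dI φ 1 = 0) :
    (∫ x in (0:ℝ)..1, a x * φ x) + (-lam + q_c) * ∫ x in (0:ℝ)..1, b x * φ x
      = p 1 * (Real.sin θ₂ * φ 1 - Real.cos θ₂ * dI φ 1) := by
  have hc : 0 < Real.cos θ₂ + 2 * Real.sin θ₂ := by
    have hcn : 0 ≤ Real.cos θ₂ := Real.cos_nonneg_of_mem_Icc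
      ⟨by linarith [hθ₂.1, Real.pi_pos], hθ₂.2⟩
    have hsn : 0 ≤ Real.sin θ₂ := Real.sin_nonneg_of_nonneg_of_le_pi hθ₂.1
      (by linarith [hθ₂.2, Real.pi_pos])
    have hc1 : Real.cos θ₂ ≤ 1 := Real.cos_le_one θ₂
    have hs1 : Real.sin θ₂ ≤ 1 := Real.sin_le_one θ₂
    nlinarith [Real.sin_sq_add_cos_sq θ₂]
  set c := Real.cos θ₂ + 2 * Real.sin θ₂ with hcdef
  have hu : UniqueDiffOn ℝ (Set.Icc (0:ℝ) 1) := uniqueDiffOn_Icc one_pos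
  have hpd : DifferentiableOn ℝ p (Set.Icc 0 1) := hp.differentiableOn one_ne_zero
  have hφd : DifferentiableOn ℝ φ (Set.Icc 0 1) := hφ.differentiableOn (by norm_num)
  have hφ'c1 : ContDiffOn ℝ 1 (dI φ) (Set.Icc 0 1) := by
    exact hφ.derivWithin hu (by norm_num)
  have hφ'd : DifferentiableOn ℝ (dI φ) (Set.Icc 0 1) := hφ'c1.differentiableOn one_ne_zero
  have hp'c : ContinuousOn (dI p) (Set.Icc 0 1) := by
    exact (hp.derivWithin (m := 0) hu (by norm_num)).continuousOn
  have hhc1 : ContDiffOn ℝ 1 (fun y => p y * dI φ y) (Set.Icc 0 1) := hp.mul hφ'c1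
  have hhd : DifferentiableOn ℝ (fun y => p y * dI φ y) (Set.Icc 0 1) :=
    hhc1.differentiableOn one_ne_zero
  have hh'c : ContinuousOn (dI (fun y => p y * dI φ y)) (Set.Icc 0 1) := by
    exact (hhc1.derivWithin (m := 0) hu (by norm_num)).continuousOn
  -- the combined integrand
  set g : ℝ → ℝ := fun x =>
    (2 * p x + 2 * x * dI p x) * φ x - x ^ 2 * dI (fun y => p y * dI φ y) x with hgdef
  have hgc : ContinuousOn g (Set.Icc 0 1) := by
    apply ContinuousOn.sub
    · exact (ContinuousOn.add (continuousOn_const.mul hp.continuousOn)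
        ((continuousOn_const.mul continuousOn_id).mul hp'c)).mul hφ.continuousOn
    · exact (continuousOn_pow 2).mul hh'c
  have hgint : IntervalIntegrable g MeasureTheory.volume 0 1 := by
    apply ContinuousOn.intervalIntegrable
    rwa [Set.uIcc_of_le (by norm_num : (0:ℝ) ≤ 1)]
  have haφint : IntervalIntegrable (fun x => a x * φ x) MeasureTheory.volume 0 1 := by
    apply ContinuousOn.intervalIntegrable
    rw [Set.uIcc_of_le (by norm_num : (0:ℝ) ≤ 1)]
    have : ContinuousOn a (Set.Icc 0 1) := by
      have : ContinuousOn (fun x =>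
          (2 * p x + 2 * x * dI p x - x^2 * qt x) / c) (Set.Icc 0 1) := by
        apply ContinuousOn.div_const
        apply ContinuousOn.sub
        · exact ContinuousOn.add (continuousOn_const.mul hp.continuousOn)
            ((continuousOn_const.mul continuousOn_id).mul hp'c)
        · refine (continuousOn_pow 2).mul ?_
          have : ContinuousOn (fun x => q x - q_c) (Set.Icc 0 1) := hq.sub continuousOn_const
          exact this.congr fun x _ => hqt x
      exact this.congr fun x _ => ha x
    exact this.mul hφ.continuousOn
  have hbφint : IntervalIntegrable (fun x => b x * φ x) MeasureTheory.volume 0 1 := by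
    apply ContinuousOn.intervalIntegrable
    rw [Set.uIcc_of_le (by norm_num : (0:ℝ) ≤ 1)]
    have : ContinuousOn b (Set.Icc 0 1) :=
      (((continuousOn_pow 2).neg).div_const c).congr fun x _ => hb x
    exact this.mul hφ.continuousOn
  -- pointwise identity of integrands
  have hpt : ∀ x ∈ Set.Icc (0:ℝ) 1,
      a x * φ x + (-lam + q_c) * (b x * φ x) = (1/c) * g x := by
    intro x hx
    have hdh : dI (fun y => p y * dI φ y) x = q x * φ x - lam * φ x := by
      have := heig x hx
      linarith
    rw [ha x, hb x, hgdef]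
    simp only
    rw [hdh, hqt x]
    field_simp
    ring
  -- combine the two integrals
  have hcomb : (∫ x in (0:ℝ)..1, a x * φ x) + (-lam + q_c) * ∫ x in (0:ℝ)..1, b x * φ x
      = (1/c) * ∫ x in (0:ℝ)..1, g x := by
    rw [← intervalIntegral.integral_const_mul, ← intervalIntegral.integral_const_mul,
      ← intervalIntegral.integral_add haφint (hbφint.const_mul _)]
    apply intervalIntegral.integral_congr
    intro x hx
    rw [Set.uIcc_of_le (by norm_num : (0:ℝ) ≤ 1)] at hx
    exact hpt x hx
  -- FTC: g is the derivative of F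
  set F : ℝ → ℝ := fun y => 2 * y * p y * φ y - y ^ 2 * (p y * dI φ y) with hFdef
  have hFderiv : ∀ x ∈ Set.Icc (0:ℝ) 1, HasDerivWithinAt F (g x) (Set.Icc 0 1) x := by
    intro x hx
    have hpx : HasDerivWithinAt p (dI p x) (Set.Icc 0 1) x := (hpd x hx).hasDerivWithinAt
    have hφx : HasDerivWithinAt φ (dI φ x) (Set.Icc 0 1) x := (hφd x hx).hasDerivWithinAt
    have hhx : HasDerivWithinAt (fun y => p y * dI φ y)
        (dI (fun y => p y * dI φ y) x) (Set.Icc 0 1) x := (hhd x hx).hasDerivWithinAt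
    have h2y : HasDerivWithinAt (fun y : ℝ => 2 * y) 2 (Set.Icc 0 1) x := by
      simpa using (hasDerivWithinAt_id x (Set.Icc 0 1)).const_mul (2:ℝ)
    have hy2 : HasDerivWithinAt (fun y : ℝ => y ^ 2) (2 * x) (Set.Icc 0 1) x := by
      simpa using (hasDerivWithinAt_id x (Set.Icc 0 1)).fun_pow 2
    have h1 : HasDerivWithinAt (fun y => 2 * y * p y * φ y)
        ((2 * p x + 2 * x * dI p x) * φ x + 2 * x * p x * dI φ x) (Set.Icc 0 1) x := by
      have := ((h2y.mul hpx).mul hφx)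
      exact this.congr_deriv (by simp only [Pi.mul_apply])
    have h2 : HasDerivWithinAt (fun y => y ^ 2 * (p y * dI φ y))
        (2 * x * (p x * dI φ x) + x ^ 2 * dI (fun y => p y * dI φ y) x)
        (Set.Icc 0 1) x := hy2.mul hhx
    have := h1.sub h2
    exact this.congr_deriv (by rw [hgdef]; ring)
  have hFTC : (∫ x in (0:ℝ)..1, g x) = F 1 - F 0 := by
    apply intervalIntegral.integral_eq_sub_of_hasDeriv_right_of_le (by norm_num)
    · exact fun x hx => (hFderiv x hx).continuousWithinAt
    · intro x hx
      have hx' : x ∈ Set.Icc (0:ℝ) 1 := Set.mem_Icc_of_Ioo hx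
      have hmem : Set.Icc (0:ℝ) 1 ∈ nhds x := Icc_mem_nhds hx.1 hx.2
      exact (((hFderiv x hx').hasDerivAt hmem).hasDerivWithinAt)
    · exact hgint
  have hF0 : F 0 = 0 := by simp [hFdef]
  have hF1 : F 1 = 2 * p 1 * φ 1 - p 1 * dI φ 1 := by norm_num [hFdef]
  rw [hcomb, hFTC, hF0, hF1]
  -- final boundary algebra
  have hkey : 2 * φ 1 - dI φ 1 = c * (Real.sin θ₂ * φ 1 - Real.cos θ₂ * dI φ 1) := by
    have hsq := Real.sin_sq_add_cos_sq θ₂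
    rw [hcdef]
    linear_combination (2*Real.cos θ₂ - Real.sin θ₂) * hbc1 + (dI φ 1 - 2 * φ 1) * hsq
  field_simp
  linear_combination p 1 * hkey
end

section
/- Let μ, η, h > 0 and c, β ∈ ℝ with μ > e^{ηh}|c|, and set ε := μ − e^{ηh}|c| > 0 and δ := min(η, ε/2). Let u : (0,∞) → ℝ be continuous and let z : [−h, ∞) → ℝ be continuous, differentiable on (0,∞), with ż(t) = −μ z(t) + c z(t−h) + β u(t) for all t > 0. Define 𝒱(t) = z(t)² + e^{ηh}|c| ∫_{t−h}^{t} e^{−2η(t−s)} z(s)² ds. Then for every t > 0: 𝒱′(t) ≤ −2δ 𝒱(t) + (β²/ε) u(t)². -/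
open Real Set

set_option maxHeartbeats 1600000 in
/-- Per-mode Lyapunov–Krasovskii dissipation estimate for the scalar delay differential
equation `ż(t) = -μ z(t) + c z(t-h) + β u(t)` with `μ > e^{ηh}|c|`:
the functional `𝒱(t) = z(t)² + e^{ηh}|c| ∫_{t-h}^t e^{-2η(t-s)} z(s)² ds` satisfies
`𝒱'(t) ≤ -2δ 𝒱(t) + (β²/ε) u(t)²` with `ε = μ - e^{ηh}|c|` and `δ = min(η, ε/2)`. -/
theorem stmt_11 (μ η h c β : ℝ) (hμ : 0 < μ) (hη : 0 < η) (hh : 0 < h)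
    (hgap : Real.exp (η*h) * |c| < μ)
    (ε δ : ℝ) (hε : ε = μ - Real.exp (η*h) * |c|) (hδ : δ = min η (ε/2))
    (u : ℝ → ℝ) (hu : ContinuousOn u (Set.Ioi 0))
    (z : ℝ → ℝ) (hz : ContinuousOn z (Set.Ici (-h)))
    (hode : ∀ t > (0:ℝ), HasDerivAt z (-μ * z t + c * z (t-h) + β * u t) t)
    (V : ℝ → ℝ)
    (hV : ∀ t, V t = z t ^ 2
      + Real.exp (η*h) * |c| * ∫ s in t - h..t, Real.exp (-2*η*(t-s)) * z s ^ 2) :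
    ∀ t > (0:ℝ), deriv V t ≤ -2*δ * V t + (β^2/ε) * u t ^ 2 := by
  intro t ht
  set e := Real.exp (η*h) with he
  have he0 : 0 < e := Real.exp_pos _
  have hε0 : 0 < ε := by rw [hε]; linarith
  -- continuous extension of the integrand
  set g : ℝ → ℝ := fun s => Real.exp (2*η*s) * (z (max s (-h)))^2 with hg
  have hgc : Continuous g := by
    apply Continuous.mul (by continuity)
    exact ((hz.comp_continuous (continuous_id.max continuous_const)
      (fun x => Set.mem_Ici.mpr (le_max_right _ _))).pow 2)
  set F : ℝ → ℝ := fun τ => ∫ s in (-h)..τ, g s with hF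
  have hFd : ∀ τ, HasDerivAt F (g τ) τ := fun τ =>
    (hgc.integral_hasStrictDerivAt (-h) τ).hasDerivAt
  -- V equals a nice formula on Ioi 0
  have hVeq : ∀ τ ∈ Set.Ioi (0:ℝ), V τ
      = z τ ^ 2 + e * |c| * (Real.exp (-2*η*τ) * (F τ - F (τ - h))) := by
    intro τ hτ
    have hτ0 : (0:ℝ) < τ := hτ
    rw [hV]
    congr 1
    have h1 : ∀ s ∈ Set.uIcc (τ - h) τ,
        Real.exp (-2*η*(τ-s)) * z s ^ 2 = Real.exp (-2*η*τ) * g s := by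
      intro s hs
      have hs1 : τ - h ≤ s := (Set.uIcc_of_le (by linarith : τ - h ≤ τ) ▸ hs).1
      have hmax : max s (-h) = s := max_eq_left (by linarith)
      have hsplit : Real.exp (-2*η*(τ-s)) = Real.exp (-2*η*τ) * Real.exp (2*η*s) := by
        rw [← Real.exp_add]; ring_nf
      rw [hg]; simp only [hmax]; rw [hsplit]; ring
    rw [intervalIntegral.integral_congr h1, intervalIntegral.integral_const_mul]
    have h2 : (∫ s in (τ-h)..τ, g s) = F τ - F (τ - h) :=
      (intervalIntegral.integral_interval_sub_left
        (hgc.intervalIntegrable _ _) (hgc.intervalIntegrable _ _)).symm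
    rw [h2]
  -- derivative of V at t
  set A := z t with hA
  set B := z (t - h) with hB
  set U := u t with hU
  set W : ℝ := Real.exp (-2*η*t) * (F t - F (t - h)) with hW
  have hmaxt : max t (-h) = t := max_eq_left (by linarith)
  have hmaxth : max (t-h) (-h) = t - h := max_eq_left (by linarith)
  have hde : HasDerivAt (fun τ => Real.exp (-2*η*τ)) (-2*η*Real.exp (-2*η*t)) t := by
    have h1 : HasDerivAt (fun τ : ℝ => -2*η*τ) (-2*η) t := by
      simpa using (hasDerivAt_id t).const_mul (-2*η)
    have := h1.exp
    convert this using 1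
    ring
  have hdF : HasDerivAt (fun τ => F τ - F (τ - h)) (g t - g (t-h)) t := by
    have h2 : HasDerivAt (fun τ => F (τ - h)) (g (t-h) * 1) t := by
      have := (hFd (t-h)).comp t ((hasDerivAt_id t).sub_const h); exact this
    have := (hFd t).sub h2; rw [mul_one] at this; exact this
  have hdz := hode t ht
  have hdV : HasDerivAt (fun τ => z τ ^ 2 + e * |c| * (Real.exp (-2*η*τ) * (F τ - F (τ - h))))
      (2 * A ^ 1 * (-μ * A + c * B + β * U)
        + e * |c| * ((-2*η*Real.exp (-2*η*t)) * (F t - F (t-h))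
          + Real.exp (-2*η*t) * (g t - g (t-h)))) t := by
    exact (hdz.pow 2).add (((hde.mul hdF)).const_mul (e * |c|))
  have hmem : Set.Ioi (0:ℝ) ∈ nhds t := Ioi_mem_nhds ht
  have hdV2 : HasDerivAt V (2 * A ^ 1 * (-μ * A + c * B + β * U)
        + e * |c| * ((-2*η*Real.exp (-2*η*t)) * (F t - F (t-h))
          + Real.exp (-2*η*t) * (g t - g (t-h)))) t := by
    apply hdV.congr_of_eventuallyEq
    filter_upwards [hmem] with τ hτ
    exact hVeq τ hτ
  rw [hdV2.deriv]
  -- simplify the derivative expression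
  have hexp1 : Real.exp (-2*η*t) * Real.exp (2*η*t) = 1 := by
    rw [← Real.exp_add]; norm_num
  have hexp2 : Real.exp (-2*η*t) * Real.exp (2*η*(t-h)) = Real.exp (-2*η*h) := by
    rw [← Real.exp_add]; ring_nf
  have hgt : g t = Real.exp (2*η*t) * A^2 := by rw [hg]; simp [hmaxt, hA]
  have hgth : g (t-h) = Real.exp (2*η*(t-h)) * B^2 := by rw [hg]; simp [hmaxth, hB]
  have hDsimp : Real.exp (-2*η*t) * (g t - g (t-h)) = A^2 - Real.exp (-2*η*h) * B^2 := by
    rw [hgt, hgth]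
    calc Real.exp (-2*η*t) * (Real.exp (2*η*t) * A^2 - Real.exp (2*η*(t-h)) * B^2)
        = (Real.exp (-2*η*t) * Real.exp (2*η*t)) * A^2
          - (Real.exp (-2*η*t) * Real.exp (2*η*(t-h))) * B^2 := by ring
      _ = A^2 - Real.exp (-2*η*h) * B^2 := by rw [hexp1, hexp2]; ring
  -- compute V t
  have hVt : V t = A^2 + e * |c| * W := hVeq t ht
  rw [hVt]
  have hWrw : (-2*η*Real.exp (-2*η*t)) * (F t - F (t-h)) = -2*η*W := by rw [hW]; ring
  rw [hWrw, hDsimp]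
  -- nonnegativity of W
  have hW0 : 0 ≤ W := by
    rw [hW]
    apply mul_nonneg (Real.exp_nonneg _)
    have : (0:ℝ) ≤ ∫ s in (t-h)..t, g s := by
      apply intervalIntegral.integral_nonneg (by linarith)
      intro s _; exact mul_nonneg (Real.exp_nonneg _) (sq_nonneg _)
    have h2 : (∫ s in (t-h)..t, g s) = F t - F (t - h) :=
      (intervalIntegral.integral_interval_sub_left
        (hgc.intervalIntegrable _ _) (hgc.intervalIntegrable _ _)).symm
    linarith [h2 ▸ this]
  -- key scalar inequalities
  clear_value A B U W
  clear hdV hdV2 hdF hFd hVeq hV hW hWrw hDsimp hgt hgth hVt hF hg hgc hu hz hode hdz F g hde hexp1 hexp2 hmaxt hmaxth hmem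
  set em := Real.exp (-(η*h)) with hem
  have heem : e * em = 1 := by rw [he, hem, ← Real.exp_add]; simp
  have hem0 : 0 < em := Real.exp_pos _
  have cross : 2*(c * (A * B)) ≤ |c| * (e*A^2 + em*B^2) := by
    have h1 : c * (A * B) ≤ |c| * (|A| * |B|) := by
      calc c * (A * B) ≤ |c * (A * B)| := le_abs_self _
        _ = |c| * (|A| * |B|) := by rw [abs_mul, abs_mul]
    have h2 : 2*(|A| * |B|) ≤ e*A^2 + em*B^2 := by
      have key : e*(e*A^2 + em*B^2 - 2*(|A| * |B|))
          = (e * |A| - |B|)^2 + (e*em - 1)*B^2 := by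
        linear_combination (-e^2) * sq_abs A - sq_abs B
      have h0 : 0 ≤ e*(e*A^2 + em*B^2 - 2*(|A| * |B|)) := by
        rw [key, heem]
        have := sq_nonneg (e * |A| - |B|)
        nlinarith
      by_contra hcon
      push_neg at hcon
      nlinarith [h0, he0]
    nlinarith [abs_nonneg c, mul_le_mul_of_nonneg_left h2 (abs_nonneg c)]
  have young : 2*(β*(A*U)) ≤ ε*A^2 + β^2/ε*U^2 := by
    have hc : ε*(β^2/ε) = β^2 := by
      field_simp
    have key : ε*(ε*A^2 + β^2/ε*U^2 - 2*(β*(A*U))) = (ε*A - β*U)^2 := by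
      linear_combination U^2 * hc
    have h0 : 0 ≤ ε*(ε*A^2 + β^2/ε*U^2 - 2*(β*(A*U))) := key ▸ sq_nonneg _
    by_contra hcon
    push_neg at hcon
    nlinarith [h0, hε0]
  have hBeq : e * |c| * (Real.exp (-2*η*h) * B^2) = |c| * (em*B^2) := by
    have : e * Real.exp (-2*η*h) = em := by
      rw [he, hem, ← Real.exp_add]; ring_nf
    calc e * |c| * (Real.exp (-2*η*h) * B^2) = |c| * ((e * Real.exp (-2*η*h)) * B^2) := by ring
      _ = |c| * (em*B^2) := by rw [this]
  have hεA : ε*A^2 = μ*A^2 - e * |c| * A^2 := by rw [hε]; ring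
  have hδη : δ ≤ η := hδ ▸ min_le_left _ _
  have hδε : 2*δ ≤ ε := by rw [hδ]; linarith [min_le_right η (ε/2)]
  have h3 : 2*(δ*A^2) ≤ ε*A^2 := by nlinarith [sq_nonneg A]
  have h4 : δ*(e * |c| * W) ≤ η*(e * |c| * W) :=
    mul_le_mul_of_nonneg_right hδη (mul_nonneg (mul_nonneg he0.le (abs_nonneg c)) hW0)
  nlinarith [cross, young, hBeq, hεA, h3, h4]
end
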